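/- Let Λ be a σ-finite measure on 𝒫 satisfying conditions (1.4) and (1.5). Then the function x ↦ Σ_{k≥1} x_k e^{θ x_k} 1_{|x_k|<1} − x₁ 1_{|x₁|<1} (terms with x_k = −∞ contributing 0) is well defined, with the series absolutely convergent for Λ-almost every x, and is Λ-integrable: ∫_𝒫 | Σ_{k≥1} x_k e^{θ x_k} 1_{|x_k|<1} − x₁ 1_{|x₁|<1} | Λ(dx) < ∞. -/
import Mathlib


open MeasureTheory ENNReal Filter

noncomputable section

/-- The space `𝒫` of nonincreasing sequences in `[-∞, ∞)` tending to `-∞`,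
equipped (as a subtype of `ℕ → EReal`) with the σ-algebra generated by the coordinate maps. -/
def calP : Set (ℕ → EReal) :=
  {x | Antitone x ∧ (∀ n, x n ≠ ⊤) ∧ Tendsto x atTop (nhds ⊥)}

/-- `e^{θ y}`, with the convention that it is `0` when `y = -∞`, even for `θ = 0`. -/
def eexp (θ : ℝ) (y : EReal) : ℝ≥0∞ :=
  if y = ⊥ then 0 else ENNReal.ofReal (Real.exp (θ * y.toReal))

/-- `⟨x, e_θ⟩ = Σ_{n ≥ 1} e^{θ x_n}` (the sequence is indexed from `0` in Lean). -/
def ip (θ : ℝ) (x : ℕ → EReal) : ℝ≥0∞ := ∑' n, eexp θ (x n)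

/-- Condition (1.4): `∫ (1 ∧ x₁²) Λ(dx) < ∞`, with `1 ∧ x₁² = 1` when `x₁ = -∞`. -/
def cond14 (Λ : Measure calP) : Prop :=
  ∫⁻ x : calP, (if x.1 0 = ⊥ then 1
    else 1 ⊓ ENNReal.ofReal ((x.1 0).toReal ^ 2)) ∂Λ < ∞

/-- Condition (1.5): `∫ (1_{x₁>1} e^{θ x₁} + Σ_{k≥2} e^{θ x_k}) Λ(dx) < ∞`. -/
def cond15 (θ : ℝ) (Λ : Measure calP) : Prop :=
  ∫⁻ x : calP, ((if (1 : EReal) < x.1 0 then eexp θ (x.1 0) else 0)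
    + ∑' k, eexp θ (x.1 (k + 1))) ∂Λ < ∞

/-- `y ↦ y e^{θ y} 1_{|y| < 1}`, with the convention that the term is `0` when `y = -∞`. -/
def xexpIn (θ : ℝ) (y : EReal) : ℝ :=
  if y ≠ ⊥ ∧ |y.toReal| < 1 then y.toReal * Real.exp (θ * y.toReal) else 0

/-- `y ↦ y 1_{|y| < 1}`, with the convention that the term is `0` when `y = -∞`. -/
def xIn (y : EReal) : ℝ := if y ≠ ⊥ ∧ |y.toReal| < 1 then y.toReal else 0

lemma eexp_meas (θ : ℝ) : Measurable (eexp θ) := by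
  unfold eexp
  exact Measurable.ite (measurableSet_singleton ⊥) measurable_const
    (ENNReal.measurable_ofReal.comp
      (Real.continuous_exp.measurable.comp (measurable_const.mul measurable_ereal_toReal)))

lemma abs_exp_sub_one_le' {s θ : ℝ} (hθ : 0 ≤ θ) (hs : |s| ≤ θ) :
    |Real.exp s - 1| ≤ |s| * Real.exp θ := by
  obtain ⟨hs1, hs2⟩ := abs_le.mp hs
  rcases le_or_gt 0 s with h | h
  · rw [abs_of_nonneg h, abs_of_nonneg (sub_nonneg.mpr (Real.one_le_exp h))]
    have h1 : Real.exp (-s) * Real.exp s = 1 := by rw [← Real.exp_add]; simp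
    have h2 : Real.exp s ≤ Real.exp θ := Real.exp_le_exp.mpr hs2
    nlinarith [Real.add_one_le_exp (-s), Real.exp_pos s]
  · rw [abs_of_neg h, abs_of_nonpos (sub_nonpos.mpr (Real.exp_le_one_iff.mpr h.le))]
    nlinarith [Real.add_one_le_exp s, Real.one_le_exp hθ]

lemma lemB (θ : ℝ) (y : EReal) : ENNReal.ofReal |xexpIn θ y| ≤ eexp θ y := by
  unfold xexpIn eexp
  by_cases hb : y = ⊥
  · simp [hb]
  rw [if_neg hb]
  by_cases h1 : |y.toReal| < 1
  · rw [if_pos ⟨hb, h1⟩]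
    apply ENNReal.ofReal_le_ofReal
    rw [abs_mul, abs_of_pos (Real.exp_pos _)]
    nlinarith [Real.exp_pos (θ * y.toReal), abs_nonneg y.toReal]
  · simp [h1]

lemma lemA {θ : ℝ} (hθ : 0 ≤ θ) (y : EReal) :
    ENNReal.ofReal |xexpIn θ y - xIn y| ≤
      ENNReal.ofReal (θ * Real.exp θ) *
        (if y = ⊥ then 1 else 1 ⊓ ENNReal.ofReal (y.toReal ^ 2)) := by
  by_cases hb : y = ⊥
  · simp [xexpIn, xIn, hb]
  by_cases h1 : |y.toReal| < 1
  · set t := y.toReal with ht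
    rw [if_neg hb]
    have habs := abs_nonneg t
    have h2 : 1 ⊓ ENNReal.ofReal (t ^ 2) = ENNReal.ofReal (t ^ 2) := by
      rw [inf_eq_right]
      exact ENNReal.ofReal_le_one.mpr (by nlinarith [sq_abs t])
    rw [h2, ← ENNReal.ofReal_mul (by positivity)]
    apply ENNReal.ofReal_le_ofReal
    rw [xexpIn, xIn, if_pos ⟨hb, h1⟩, if_pos ⟨hb, h1⟩, ← ht]
    have harr : t * Real.exp (θ * t) - t = t * (Real.exp (θ * t) - 1) := by ring
    rw [harr, abs_mul]
    have hst : |θ * t| ≤ θ := by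
      rw [abs_mul, abs_of_nonneg hθ]; nlinarith
    calc |t| * |Real.exp (θ * t) - 1| ≤ |t| * (|θ * t| * Real.exp θ) :=
          mul_le_mul_of_nonneg_left (abs_exp_sub_one_le' hθ hst) (abs_nonneg t)
      _ ≤ θ * Real.exp θ * t ^ 2 := by
          rw [abs_mul, abs_of_nonneg hθ]
          have ht2 : t ^ 2 = |t| * |t| := by rw [abs_mul_abs_self]; ring
          rw [ht2]; exact le_of_eq (by ring)
  · simp [xexpIn, xIn, h1]

/-- the function `x ↦ Σ_{k≥1} x_k e^{θ x_k} 1_{|x_k|<1} - x₁ 1_{|x₁|<1}` is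
well defined, the series being absolutely convergent for `Λ`-a.e. `x`, and it is
`Λ`-integrable. -/
theorem stmt8 (θ : ℝ) (hθ : 0 ≤ θ) (Λ : Measure calP) [SigmaFinite Λ]
    (h14 : cond14 Λ) (h15 : cond15 θ Λ) :
    (∀ᵐ x : calP ∂Λ, Summable fun k => xexpIn θ (x.1 k)) ∧
      ∫⁻ x : calP, ENNReal.ofReal |(∑' k, xexpIn θ (x.1 k)) - xIn (x.1 0)| ∂Λ < ∞ := by
  classical
  set C : ℝ≥0∞ := ENNReal.ofReal (θ * Real.exp θ) with hC
  set g : calP → ℝ≥0∞ := fun x => ∑' k, eexp θ (x.1 (k + 1)) with hg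
  set F : calP → ℝ≥0∞ := fun x =>
    if x.1 0 = ⊥ then 1 else 1 ⊓ ENNReal.ofReal ((x.1 0).toReal ^ 2) with hF
  have hcoord : ∀ k, Measurable fun x : calP => x.1 k := fun k =>
    (measurable_pi_apply k).comp measurable_subtype_coe
  have hgmeas : Measurable g :=
    Measurable.ennreal_tsum fun k => (eexp_meas θ).comp (hcoord (k + 1))
  have hFmeas : Measurable F := by
    have h : Measurable fun y : EReal =>
        (if y = ⊥ then 1 else 1 ⊓ ENNReal.ofReal (y.toReal ^ 2) : ℝ≥0∞) :=
      Measurable.ite (measurableSet_singleton ⊥) measurable_const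
        (measurable_const.inf
          (ENNReal.measurable_ofReal.comp (measurable_ereal_toReal.pow_const 2)))
    exact h.comp (hcoord 0)
  have hgint : ∫⁻ x, g x ∂Λ < ∞ :=
    lt_of_le_of_lt (lintegral_mono fun x => le_add_self) h15
  have hgae : ∀ᵐ x ∂Λ, g x ≠ ∞ := by
    filter_upwards [ae_lt_top hgmeas hgint.ne] with x hx using hx.ne
  -- key a.e. facts
  have hkey : ∀ᵐ x ∂Λ, (Summable fun k => xexpIn θ (x.1 k)) ∧
      ENNReal.ofReal |(∑' k, xexpIn θ (x.1 k)) - xIn (x.1 0)| ≤ C * F x + g x := by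
    filter_upwards [hgae] with x hx
    have htsum_le : ∑' k, ENNReal.ofReal |xexpIn θ (x.1 (k + 1))| ≤ g x :=
      ENNReal.tsum_le_tsum fun k => lemB θ _
    have htail_abs : Summable fun k => |xexpIn θ (x.1 (k + 1))| := by
      have h1 : ∑' k, ENNReal.ofReal |xexpIn θ (x.1 (k + 1))| ≠ ∞ :=
        ne_top_of_le_ne_top hx htsum_le
      have h2 : (fun k => (ENNReal.ofReal |xexpIn θ (x.1 (k + 1))|).toReal)
          = fun k => |xexpIn θ (x.1 (k + 1))| :=
        funext fun k => ENNReal.toReal_ofReal (abs_nonneg _)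
      rw [← h2]; exact ENNReal.summable_toReal h1
    have htail : Summable fun k => xexpIn θ (x.1 (k + 1)) := htail_abs.of_abs
    have hfull : Summable fun k => xexpIn θ (x.1 k) := (summable_nat_add_iff 1).mp htail
    refine ⟨hfull, ?_⟩
    have hsplit : ∑' k, xexpIn θ (x.1 k)
        = xexpIn θ (x.1 0) + ∑' k, xexpIn θ (x.1 (k + 1)) := Summable.tsum_eq_zero_add hfull
    have harr : (∑' k, xexpIn θ (x.1 k)) - xIn (x.1 0)
        = (xexpIn θ (x.1 0) - xIn (x.1 0)) + ∑' k, xexpIn θ (x.1 (k + 1)) := by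
      rw [hsplit]; ring
    rw [harr]
    have hB : |∑' k, xexpIn θ (x.1 (k + 1))| ≤ ∑' k, |xexpIn θ (x.1 (k + 1))| := by
      simpa [Real.norm_eq_abs] using
        norm_tsum_le_tsum_norm (f := fun k => xexpIn θ (x.1 (k + 1)))
          (by simpa [Real.norm_eq_abs] using htail_abs)
    calc ENNReal.ofReal |(xexpIn θ (x.1 0) - xIn (x.1 0)) + ∑' k, xexpIn θ (x.1 (k + 1))|
        ≤ ENNReal.ofReal (|xexpIn θ (x.1 0) - xIn (x.1 0)| + |∑' k, xexpIn θ (x.1 (k + 1))|) :=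
          ENNReal.ofReal_le_ofReal (abs_add_le _ _)
      _ ≤ ENNReal.ofReal |xexpIn θ (x.1 0) - xIn (x.1 0)|
          + ENNReal.ofReal |∑' k, xexpIn θ (x.1 (k + 1))| := ENNReal.ofReal_add_le
      _ ≤ C * F x + g x := by
          gcongr
          · exact lemA hθ _
          · calc ENNReal.ofReal |∑' k, xexpIn θ (x.1 (k + 1))|
                ≤ ENNReal.ofReal (∑' k, |xexpIn θ (x.1 (k + 1))|) :=
                  ENNReal.ofReal_le_ofReal hB
              _ = ∑' k, ENNReal.ofReal |xexpIn θ (x.1 (k + 1))| :=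
                  ENNReal.ofReal_tsum_of_nonneg (fun k => abs_nonneg _) htail_abs
              _ ≤ g x := htsum_le
  refine ⟨hkey.mono fun x h => h.1, ?_⟩
  calc ∫⁻ x, ENNReal.ofReal |(∑' k, xexpIn θ (x.1 k)) - xIn (x.1 0)| ∂Λ
      ≤ ∫⁻ x, (C * F x + g x) ∂Λ := lintegral_mono_ae (hkey.mono fun x h => h.2)
    _ = C * ∫⁻ x, F x ∂Λ + ∫⁻ x, g x ∂Λ := by
        rw [lintegral_add_left (hFmeas.const_mul C), lintegral_const_mul C hFmeas]
    _ < ∞ := ENNReal.add_lt_top.mpr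
        ⟨ENNReal.mul_lt_top ENNReal.ofReal_lt_top h14, hgint⟩
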